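/- Fix ρ > 0 and z ∈ ℂ. Then, as τ₁ → −∞ and τ₂ → +∞, the two-sided hard edge scaling limit converges to the free boundary scaling limit: lim ∫_{−ρ/2}^{ρ/2} e^{−(2·Re z − ξ)²/2} / (∫_{(ρ/2)(2τ₁−1)}^{(ρ/2)(2τ₂−1)} e^{−(t−ξ)²/2} dt) dξ = (1/√(2π)) ∫_{−ρ/2}^{ρ/2} e^{−(2·Re z − ξ)²/2} dξ. -/

import Mathlib

open Filter MeasureTheory Real

noncomputable section

/-- The two-sided hard edge scaling limit `R^{τ₁,τ₂}`. -/
def Rlim2 (ρ τ1 τ2 : ℝ) (z : ℂ) : ℝ :=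
  ∫ ξ in (-(ρ/2))..(ρ/2),
    Real.exp (-(2 * z.re - ξ)^2 / 2) /
      ∫ t in (ρ/2 * (2*τ1 - 1))..(ρ/2 * (2*τ2 - 1)), Real.exp (-(t - ξ)^2 / 2)

/-- The free boundary scaling limit
`R^{(1)}(z) = (1/√(2π)) ∫_{-ρ/2}^{ρ/2} e^{-(2 Re z - ξ)²/2} dξ`. -/
def Rone (ρ : ℝ) (z : ℂ) : ℝ :=
  (Real.sqrt (2 * π))⁻¹ * ∫ ξ in (-(ρ/2))..(ρ/2), Real.exp (-(2 * z.re - ξ)^2 / 2)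


private lemma gauss_cont : Continuous fun t : ℝ => Real.exp (-t^2/2) := by
  continuity

private lemma gauss_integrable : Integrable (fun t : ℝ => Real.exp (-t^2/2)) := by
  have h := integrable_exp_neg_mul_sq (show (0:ℝ) < 1/2 by norm_num)
  have e : (fun x : ℝ => Real.exp (-x^2/2)) = fun x => Real.exp (-(1/2:ℝ) * x^2) := by
    funext x; ring_nf
  rw [e]; exact h

private lemma gauss_total : ∫ x : ℝ, Real.exp (-x^2/2) = Real.sqrt (2*π) := by
  have h := integral_gaussian (1/2 : ℝ)
  have e : (fun x : ℝ => Real.exp (-x^2/2)) = fun x => Real.exp (-(1/2:ℝ) * x^2) := by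
    funext x; ring_nf
  rw [e, h]
  congr 1
  ring

private lemma inner_cont (a b : ℝ) :
    Continuous fun ξ : ℝ => ∫ t in a..b, Real.exp (-(t - ξ)^2 / 2) := by
  have key : ∀ ξ : ℝ, (∫ t in a..b, Real.exp (-(t - ξ)^2 / 2)) =
      (∫ t in (0:ℝ)..(b - ξ), Real.exp (-t^2/2)) -
        ∫ t in (0:ℝ)..(a - ξ), Real.exp (-t^2/2) := by
    intro ξ
    rw [intervalIntegral.integral_interval_sub_left
      (gauss_cont.intervalIntegrable (μ := volume) (0:ℝ) (b - ξ))
      (gauss_cont.intervalIntegrable (μ := volume) (0:ℝ) (a - ξ))]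
    simpa using intervalIntegral.integral_comp_sub_right (a := a) (b := b)
      (fun t => Real.exp (-t^2/2)) ξ
  have G : Continuous fun x : ℝ => ∫ t in (0:ℝ)..x, Real.exp (-t^2/2) :=
    intervalIntegral.continuous_primitive (fun a b => gauss_cont.intervalIntegrable (μ := volume) a b) 0
  have : Continuous fun ξ : ℝ =>
      (∫ t in (0:ℝ)..(b - ξ), Real.exp (-t^2/2)) -
        ∫ t in (0:ℝ)..(a - ξ), Real.exp (-t^2/2) :=
    (G.comp (by continuity)).sub (G.comp (by continuity))
  exact this.congr fun ξ => (key ξ).symm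

private lemma inner_lb {a b ξ : ℝ} (ha : a ≤ ξ - 1) (hb : ξ + 1 ≤ b) :
    2 * Real.exp (-(1:ℝ)/2) ≤ ∫ t in a..b, Real.exp (-(t - ξ)^2 / 2) := by
  have hcont : Continuous fun t : ℝ => Real.exp (-(t - ξ)^2 / 2) := by continuity
  have h1 : (∫ t in (ξ-1)..(ξ+1), Real.exp (-(t - ξ)^2 / 2)) ≤
      ∫ t in a..b, Real.exp (-(t - ξ)^2 / 2) :=
    intervalIntegral.integral_mono_interval ha (by linarith) hb
      (Filter.Eventually.of_forall fun t => (Real.exp_pos _).le)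
      (hcont.intervalIntegrable (μ := volume) a b)
  have h2 : (∫ t in (ξ-1)..(ξ+1), (Real.exp (-(1:ℝ)/2) : ℝ)) ≤
      ∫ t in (ξ-1)..(ξ+1), Real.exp (-(t - ξ)^2 / 2) := by
    apply intervalIntegral.integral_mono_on (by linarith)
      (intervalIntegrable_const) (hcont.intervalIntegrable (μ := volume) _ _)
    intro x hx
    apply Real.exp_le_exp.mpr
    have h3 : (x - ξ)^2 ≤ 1 := by
      rw [Set.mem_Icc] at hx
      nlinarith [hx.1, hx.2]
    nlinarith
  have h4 : (∫ t in (ξ-1)..(ξ+1), (Real.exp (-(1:ℝ)/2) : ℝ)) = 2 * Real.exp (-(1:ℝ)/2) := by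
    rw [intervalIntegral.integral_const]
    simp [smul_eq_mul]
    ring
  linarith [h4 ▸ h2]

theorem hard_edge_to_free_boundary_limit' (ρ : ℝ) (hρ : 0 < ρ) (z : ℂ) :
    Tendsto (fun p : ℝ × ℝ =>
      ∫ ξ in (-(ρ/2))..(ρ/2),
        Real.exp (-(2 * z.re - ξ)^2 / 2) /
          ∫ t in (ρ/2 * (2*p.1 - 1))..(ρ/2 * (2*p.2 - 1)), Real.exp (-(t - ξ)^2 / 2))
      (atBot ×ˢ atTop)
      (nhds ((Real.sqrt (2 * π))⁻¹ *
        ∫ ξ in (-(ρ/2))..(ρ/2), Real.exp (-(2 * z.re - ξ)^2 / 2))) := by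
  have hle : -(ρ/2) ≤ ρ/2 := by linarith
  have hsq : (0:ℝ) < Real.sqrt (2 * π) := Real.sqrt_pos.mpr (by positivity)
  have hfc : Continuous fun ξ : ℝ => Real.exp (-(2 * z.re - ξ)^2 / 2) := by continuity
  set l : Filter (ℝ × ℝ) := atBot ×ˢ atTop with hl
  -- endpoint tendsto
  have h1 : Tendsto (fun x : ℝ => ρ/2 * (2*x - 1)) atBot atBot := by
    have : Tendsto (fun x : ℝ => ρ * x + -(ρ/2)) atBot atBot :=
      tendsto_atBot_add_const_right _ _ ((tendsto_id (α := ℝ)).const_mul_atBot hρ)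
    exact this.congr fun x => by ring
  have h2 : Tendsto (fun x : ℝ => ρ/2 * (2*x - 1)) atTop atTop := by
    have : Tendsto (fun x : ℝ => ρ * x + -(ρ/2)) atTop atTop :=
      tendsto_atTop_add_const_right _ _ ((tendsto_id (α := ℝ)).const_mul_atTop hρ)
    exact this.congr fun x => by ring
  have hA : Tendsto (fun p : ℝ × ℝ => ρ/2 * (2*p.1 - 1)) l atBot :=
    h1.comp tendsto_fst
  have hB : Tendsto (fun p : ℝ × ℝ => ρ/2 * (2*p.2 - 1)) l atTop :=
    h2.comp tendsto_snd
  -- rewrite interval integrals as set integrals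
  have hIoc : ∀ g : ℝ → ℝ, (∫ ξ in (-(ρ/2))..(ρ/2), g ξ) =
      ∫ ξ in Set.Ioc (-(ρ/2)) (ρ/2), g ξ := fun g =>
    intervalIntegral.integral_of_le hle
  simp only [hIoc]
  -- target value
  have hval : (Real.sqrt (2 * π))⁻¹ *
      (∫ ξ in Set.Ioc (-(ρ/2)) (ρ/2), Real.exp (-(2 * z.re - ξ)^2 / 2)) =
      ∫ ξ in Set.Ioc (-(ρ/2)) (ρ/2),
        Real.exp (-(2 * z.re - ξ)^2 / 2) / Real.sqrt (2 * π) := by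
    rw [integral_div, inv_mul_eq_div]
  rw [hval]
  -- dominated convergence
  apply tendsto_integral_filter_of_dominated_convergence
    (fun _ : ℝ => (2 * Real.exp (-(1:ℝ)/2))⁻¹)
  · refine Filter.Eventually.of_forall fun p => ?_
    exact (hfc.measurable.div ((inner_cont _ _).measurable)).aestronglyMeasurable
  · filter_upwards [hA.eventually_le_atBot (-(ρ/2) - 1),
      hB.eventually_ge_atTop (ρ/2 + 1)] with p hp1 hp2
    refine (ae_restrict_iff' measurableSet_Ioc).mpr (Filter.Eventually.of_forall
      fun ξ hξ => ?_)
    obtain ⟨hξ1, hξ2⟩ := hξ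
    have hlb : 2 * Real.exp (-(1:ℝ)/2) ≤
        ∫ t in (ρ/2 * (2*p.1 - 1))..(ρ/2 * (2*p.2 - 1)), Real.exp (-(t - ξ)^2 / 2) :=
      inner_lb (by linarith) (by linarith)
    have hc0 : (0:ℝ) < 2 * Real.exp (-(1:ℝ)/2) := by positivity
    have hIpos : (0:ℝ) <
        ∫ t in (ρ/2 * (2*p.1 - 1))..(ρ/2 * (2*p.2 - 1)), Real.exp (-(t - ξ)^2 / 2) :=
      lt_of_lt_of_le hc0 hlb
    rw [Real.norm_eq_abs, abs_of_nonneg (div_nonneg (Real.exp_pos _).le hIpos.le)]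
    calc Real.exp (-(2 * z.re - ξ)^2 / 2) /
          (∫ t in (ρ/2 * (2*p.1 - 1))..(ρ/2 * (2*p.2 - 1)), Real.exp (-(t - ξ)^2 / 2))
        ≤ 1 / (2 * Real.exp (-(1:ℝ)/2)) := by
          apply div_le_div₀ (by norm_num) _ hc0 hlb
          have hsqn : (0:ℝ) ≤ (2 * z.re - ξ)^2 := sq_nonneg _
          exact Real.exp_le_one_iff.mpr (by linarith)
      _ = (2 * Real.exp (-(1:ℝ)/2))⁻¹ := one_div _
  · exact (integrableOn_const_iff).mpr (Or.inr measure_Ioc_lt_top)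
  · refine Filter.Eventually.of_forall fun ξ => ?_
    have hint : Integrable (fun t : ℝ => Real.exp (-(t - ξ)^2 / 2)) := by
      have := gauss_integrable.comp_sub_right ξ
      simpa using this
    have hval2 : (∫ t : ℝ, Real.exp (-(t - ξ)^2 / 2)) = Real.sqrt (2 * π) := by
      have h := MeasureTheory.integral_sub_right_eq_self (μ := volume)
        (fun t : ℝ => Real.exp (-t^2/2)) ξ
      simpa [gauss_total] using h
    have hinner : Tendsto (fun p : ℝ × ℝ =>
        ∫ t in (ρ/2 * (2*p.1 - 1))..(ρ/2 * (2*p.2 - 1)), Real.exp (-(t - ξ)^2 / 2))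
        l (nhds (Real.sqrt (2 * π))) := by
      have := intervalIntegral_tendsto_integral hint hA hB
      rwa [hval2] at this
    exact tendsto_const_nhds.div hinner hsq.ne'

/-- **(Recovering the free boundary limit from the two-sided hard edge limit.)** For fixed
`ρ > 0` and `z ∈ ℂ`, as `τ₁ → -∞` and `τ₂ → +∞`, the two-sided hard edge scaling limit
`R^{τ₁,τ₂}(z)` converges to the free boundary scaling limit `R^{(1)}(z)`. -/
theorem hard_edge_to_free_boundary_limit (ρ : ℝ) (hρ : 0 < ρ) (z : ℂ) :
    Tendsto (fun p : ℝ × ℝ => Rlim2 ρ p.1 p.2 z) (atBot ×ˢ atTop)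
      (nhds (Rone ρ z)) := by
  exact hard_edge_to_free_boundary_limit' ρ hρ z
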